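/- For all natural numbers n, all complex ρ and all complex β not a nonpositive integer: Σ_{m=0}^{n} (-1)^m · C(n,m) · (β)^{(m)} · (β)^{(n-m)} · Σ_{k=0}^{m} C(m,k) · C(n-m,k) · ρ^k · k!/(β)^{(k)} equals 0 if n is odd, and equals (n!/(n/2)!) · (β)^{(n/2)} · (1-ρ)^{n/2} if n is even. -/

import Mathlib

open Finset

noncomputable def ap (x : ℂ) (k : ℕ) : ℂ := (ascPochhammer ℂ k).eval x
lemma ap_zero (x : ℂ) : ap x 0 = 1 := by simp [ap]
lemma ap_succ (x : ℂ) (k : ℕ) : ap x (k + 1) = ap x k * (x + k) :=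
  ascPochhammer_succ_eval k x
lemma ap_add (x : ℂ) (m k : ℕ) : ap x (m + k) = ap x m * ap (x + m) k := by
  induction k with
  | zero => simp [ap_zero]
  | succ k ih => rw [← add_assoc, ap_succ, ih, ap_succ]; push_cast; ring
lemma ap_ne_zero {x : ℂ} (hx : ∀ j : ℕ, x ≠ -(j : ℂ)) (k : ℕ) : ap x k ≠ 0 := by
  rw [ap, Ne, ascPochhammer_eval_eq_zero_iff]
  rintro ⟨j, -, hj⟩
  exact hx j (by rw [← neg_neg x, ← hj])
noncomputable def AA (γ : ℂ) (N : ℕ) : ℂ :=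
  ∑ j ∈ range (N + 1), (-1 : ℂ) ^ j * (N.choose j : ℂ) * ap γ j * ap γ (N - j)

lemma hE_lemma (γ : ℂ) (N : ℕ) :
    ∑ j ∈ range (N + 2), (-1 : ℂ) ^ j * (N.choose j : ℂ) * ap γ j * ap γ (N + 1 - j)
      = ∑ j ∈ range (N + 1), (-1 : ℂ) ^ j * (N.choose j : ℂ) * ap γ j *
          (ap γ (N - j) * (γ + ((N : ℂ) - j))) := by
  rw [Finset.sum_range_succ, Nat.choose_succ_self]
  simp only [Nat.cast_zero, mul_zero, zero_mul, add_zero]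
  refine Finset.sum_congr rfl fun j hj => ?_
  rw [Finset.mem_range] at hj
  have h1 : N + 1 - j = (N - j) + 1 := by omega
  rw [h1, ap_succ, Nat.cast_sub (by omega : j ≤ N)]

lemma hE'_lemma (γ : ℂ) (N : ℕ) :
    ∑ j ∈ range (N + 2), (-1 : ℂ) ^ j * (N.choose j : ℂ) * ap γ j * ap γ (N + 1 - j)
      = (∑ i ∈ range (N + 1),
          (-1 : ℂ) ^ (i + 1) * (N.choose (i + 1) : ℂ) * ap γ (i + 1) * ap γ (N - i))
        + ap γ (N + 1) := by
  rw [Finset.sum_range_succ']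
  simp [ap_zero]

lemma AA_succ (γ : ℂ) (N : ℕ) :
    AA γ (N + 1) =
      ∑ j ∈ range (N + 1), (-1 : ℂ) ^ j * (N.choose j : ℂ) * ((N : ℂ) - 2 * j) *
        (ap γ j * ap γ (N - j)) := by
  have hE : ∑ j ∈ range (N + 2), (-1 : ℂ) ^ j * (N.choose j : ℂ) * ap γ j * ap γ (N + 1 - j)
      = ∑ j ∈ range (N + 1), (-1 : ℂ) ^ j * (N.choose j : ℂ) * ap γ j *
          (ap γ (N - j) * (γ + ((N : ℂ) - j))) := by
    rw [Finset.sum_range_succ, Nat.choose_succ_self]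
    simp only [Nat.cast_zero, mul_zero, zero_mul, add_zero]
    refine Finset.sum_congr rfl fun j hj => ?_
    rw [Finset.mem_range] at hj
    have h1 : N + 1 - j = (N - j) + 1 := by omega
    rw [h1, ap_succ, Nat.cast_sub (by omega : j ≤ N)]
  have hE' : ∑ j ∈ range (N + 2), (-1 : ℂ) ^ j * (N.choose j : ℂ) * ap γ j * ap γ (N + 1 - j)
      = (∑ i ∈ range (N + 1),
          (-1 : ℂ) ^ (i + 1) * (N.choose (i + 1) : ℂ) * ap γ (i + 1) * ap γ (N - i))
        + ap γ (N + 1) := by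
    rw [Finset.sum_range_succ']
    simp [ap_zero]
  have step1 : AA γ (N + 1)
      = ap γ (N + 1)
        + ((∑ i ∈ range (N + 1), (-1:ℂ)^(i+1) * (N.choose i : ℂ) * ap γ (i+1) * ap γ (N - i))
        + (∑ i ∈ range (N + 1), (-1:ℂ)^(i+1) * (N.choose (i+1) : ℂ) * ap γ (i+1) * ap γ (N - i))) := by
    rw [AA, Finset.sum_range_succ', add_comm]
    congr 1
    · simp [ap_zero]
    · rw [← Finset.sum_add_distrib]
      refine Finset.sum_congr rfl fun i hi => ?_
      rw [Nat.succ_sub_succ, Nat.choose_succ_succ]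
      push_cast
      ring
  have hS1 : (∑ i ∈ range (N + 1), (-1:ℂ)^(i+1) * (N.choose i : ℂ) * ap γ (i+1) * ap γ (N - i))
      = ∑ j ∈ range (N + 1), -((-1:ℂ)^j * (N.choose j : ℂ) * (ap γ j * (γ + j)) * ap γ (N - j)) :=
    Finset.sum_congr rfl fun j _ => by rw [ap_succ]; ring
  have hT : (∑ j ∈ range (N + 1), (-1 : ℂ) ^ j * (N.choose j : ℂ) * ap γ j *
          (ap γ (N - j) * (γ + ((N : ℂ) - j))))
      + (∑ j ∈ range (N + 1), -((-1:ℂ)^j * (N.choose j : ℂ) * (ap γ j * (γ + j)) * ap γ (N - j)))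
      = ∑ j ∈ range (N + 1), (-1 : ℂ) ^ j * (N.choose j : ℂ) * ((N : ℂ) - 2 * j) *
        (ap γ j * ap γ (N - j)) := by
    rw [← Finset.sum_add_distrib]
    exact Finset.sum_congr rfl fun j hj => by ring
  linear_combination step1 + hS1 + hT + hE - hE'

lemma BB_succ (γ : ℂ) (N : ℕ) :
    ∑ j ∈ range (N + 2), (-1 : ℂ) ^ j * ((N + 1).choose j : ℂ) * (((N : ℂ) + 1) - 2 * j) *
        (ap γ j * ap γ (N + 1 - j))
      = ((N : ℂ) + 1) * (2 * γ + N) * AA γ N := by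
  have hch : ∀ i : ℕ, (((N + 1).choose (i + 1) : ℕ) : ℂ) * (((N : ℂ) + 1) - 2 * ((i : ℂ) + 1))
      = ((N : ℂ) + 1) * ((N.choose (i + 1) : ℂ) - (N.choose i : ℂ)) := by
    intro i
    have h1 : ((N : ℂ) + 1) * (N.choose i : ℂ) = ((N + 1).choose (i + 1) : ℂ) * ((i : ℂ) + 1) := by
      exact_mod_cast congrArg (Nat.cast (R := ℂ)) (Nat.add_one_mul_choose_eq N i)
    have h2 : (((N + 1).choose (i + 1) : ℕ) : ℂ) = (N.choose i : ℂ) + (N.choose (i + 1) : ℂ) := by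
      rw [Nat.choose_succ_succ]; push_cast; ring
    linear_combination ((N : ℂ) + 1) * h2 + 2 * h1
  have step1 : ∑ j ∈ range (N + 2), (-1 : ℂ) ^ j * ((N + 1).choose j : ℂ) *
        (((N : ℂ) + 1) - 2 * j) * (ap γ j * ap γ (N + 1 - j))
      = ((N : ℂ) + 1) * ap γ (N + 1)
        + ∑ i ∈ range (N + 1), (-1 : ℂ) ^ (i + 1) *
            (((N : ℂ) + 1) * ((N.choose (i + 1) : ℂ) - (N.choose i : ℂ))) *
            (ap γ (i + 1) * ap γ (N - i)) := by
    rw [Finset.sum_range_succ', add_comm]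
    congr 1
    · simp [ap_zero]
    · refine Finset.sum_congr rfl fun i hi => ?_
      rw [Nat.succ_sub_succ, ← hch i]
      push_cast
      ring
  have hsplit : ∑ i ∈ range (N + 1), (-1 : ℂ) ^ (i + 1) *
        (((N : ℂ) + 1) * ((N.choose (i + 1) : ℂ) - (N.choose i : ℂ))) *
        (ap γ (i + 1) * ap γ (N - i))
      = ((N : ℂ) + 1) * ((∑ i ∈ range (N + 1),
          (-1 : ℂ) ^ (i + 1) * (N.choose (i + 1) : ℂ) * ap γ (i + 1) * ap γ (N - i))
        + (∑ i ∈ range (N + 1),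
          (-1 : ℂ) ^ i * (N.choose i : ℂ) * (ap γ i * (γ + i)) * ap γ (N - i))) := by
    rw [← Finset.sum_add_distrib, Finset.mul_sum]
    refine Finset.sum_congr rfl fun i hi => ?_
    rw [ap_succ]
    ring
  have hsum2 : (∑ j ∈ range (N + 1), (-1 : ℂ) ^ j * (N.choose j : ℂ) * ap γ j *
        (ap γ (N - j) * (γ + ((N : ℂ) - j))))
      + (∑ j ∈ range (N + 1), (-1 : ℂ) ^ j * (N.choose j : ℂ) * (ap γ j * (γ + j)) * ap γ (N - j))
      = (2 * γ + N) * AA γ N := by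
    rw [AA, Finset.mul_sum, ← Finset.sum_add_distrib]
    refine Finset.sum_congr rfl fun j hj => ?_
    ring
  have hE := hE_lemma γ N
  have hE' := hE'_lemma γ N
  linear_combination step1 + hsplit + ((N : ℂ) + 1) * (hE - hE' + hsum2)

lemma AA_rec (γ : ℂ) (N : ℕ) :
    AA γ (N + 2) = ((N : ℂ) + 1) * (2 * γ + N) * AA γ N := by
  have h := AA_succ γ (N + 1)
  rw [← BB_succ γ N] at *
  rw [h]
  refine Finset.sum_congr rfl fun j hj => ?_
  push_cast
  ring

lemma AA_zero (γ : ℂ) : AA γ 0 = 1 := by simp [AA, ap_zero]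

lemma AA_one (γ : ℂ) : AA γ 1 = 0 := by
  rw [AA, Finset.sum_range_succ, Finset.sum_range_one]
  simp [ap_zero, ap_succ]

lemma AA_odd (γ : ℂ) (N : ℕ) (h : Odd N) : AA γ N = 0 := by
  obtain ⟨t, rfl⟩ := h
  induction t with
  | zero => simpa using AA_one γ
  | succ t ih =>
    have : 2 * (t + 1) + 1 = (2 * t + 1) + 2 := by ring
    rw [this, AA_rec, ih]
    ring

lemma AA_even (γ : ℂ) (s : ℕ) :
    AA γ (2 * s) = ((2 * s).factorial : ℂ) / (s.factorial : ℂ) * ap γ s := by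
  induction s with
  | zero => simp [AA_zero, ap_zero]
  | succ s ih =>
    have h2 : 2 * (s + 1) = 2 * s + 2 := by ring
    rw [h2, AA_rec, ih, ap_succ]
    have hs : (s.factorial : ℂ) ≠ 0 := Nat.cast_ne_zero.mpr s.factorial_ne_zero
    have hs1 : ((s + 1).factorial : ℂ) ≠ 0 := Nat.cast_ne_zero.mpr (s + 1).factorial_ne_zero
    have hf1 : ((2 * s + 2).factorial : ℂ)
        = ((2 * s).factorial : ℂ) * (2 * (s : ℂ) + 1) * (2 * (s : ℂ) + 2) := by
      have : (2 * s + 2).factorial = (2 * s).factorial * (2 * s + 1) * (2 * s + 2) := by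
        rw [show 2 * s + 2 = (2 * s + 1) + 1 from rfl, Nat.factorial_succ, Nat.factorial_succ]
        ring
      rw [this]; push_cast; ring
    have hf2 : ((s + 1).factorial : ℂ) = (s.factorial : ℂ) * ((s : ℂ) + 1) := by
      rw [Nat.factorial_succ]; push_cast; ring
    have hsp : (s : ℂ) + 1 ≠ 0 := Nat.cast_add_one_ne_zero s
    rw [hf1, hf2]
    field_simp
    push_cast; ring

lemma colsum (n k : ℕ) (ρ β : ℂ) (hβ : ∀ j : ℕ, β ≠ -(j : ℂ)) :
    ∑ m ∈ range (n + 1), (-1 : ℂ) ^ m * (n.choose m : ℂ) * ap β m * ap β (n - m) *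
        ((m.choose k : ℂ) * ((n - m).choose k : ℂ) * ρ ^ k * (k.factorial : ℂ) / ap β k)
      = (-ρ) ^ k * (k.factorial : ℂ) * ap β k * (n.choose k : ℂ) * ((n - k).choose k : ℂ) *
        AA (β + k) (n - 2 * k) := by
  have hap : ap β k ≠ 0 := ap_ne_zero hβ k
  by_cases h2k : 2 * k ≤ n
  · have hsub : Ico k (n - k + 1) ⊆ range (n + 1) := by
      intro m hm; rw [mem_Ico] at hm; rw [mem_range]; omega
    rw [← Finset.sum_subset hsub]
    · rw [Finset.sum_Ico_eq_sum_range, show n - k + 1 - k = n - 2 * k + 1 by omega,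
        AA, Finset.mul_sum]
      refine Finset.sum_congr rfl fun j hj => ?_
      rw [mem_range] at hj
      have hjle : j ≤ n - 2 * k := by omega
      have hkjn : k + j ≤ n := by omega
      have e1 : ap β (k + j) = ap β k * ap (β + k) j := ap_add β k j
      have e3 : ap β (n - (k + j)) = ap β k * ap (β + k) (n - 2 * k - j) := by
        rw [show n - (k + j) = k + (n - 2 * k - j) by omega, ap_add]
      have c1 : n.choose (k + j) * (k + j).choose k = n.choose k * (n - k).choose j := by
        rw [Nat.choose_mul (Nat.le_add_right k j)]
        congr 1
        rw [Nat.add_sub_cancel_left]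
      have c2 : (n - k).choose j * (n - (k + j)).choose k
          = (n - k).choose k * (n - 2 * k).choose j := by
        have ha1 : j ≤ n - k := by omega
        rw [show n - (k + j) = (n - k) - j by omega, ← Nat.choose_symm ha1,
          Nat.choose_mul (by omega : k ≤ (n - k) - j),
          show (n - k) - k = n - 2 * k by omega, show (n - k) - j - k = (n - 2 * k) - j by omega,
          Nat.choose_symm hjle]
      have cc : n.choose (k + j) * ((k + j).choose k * (n - (k + j)).choose k)
          = n.choose k * ((n - k).choose k * (n - 2 * k).choose j) := by
        calc n.choose (k + j) * ((k + j).choose k * (n - (k + j)).choose k)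
            = n.choose (k + j) * (k + j).choose k * (n - (k + j)).choose k := by ring
          _ = n.choose k * (n - k).choose j * (n - (k + j)).choose k := by rw [c1]
          _ = n.choose k * ((n - k).choose j * (n - (k + j)).choose k) := by ring
          _ = _ := by rw [c2]
      have ccC : (n.choose (k + j) : ℂ) * ((k + j).choose k : ℂ) * ((n - (k + j)).choose k : ℂ)
          = (n.choose k : ℂ) * ((n - k).choose k : ℂ) * ((n - 2 * k).choose j : ℂ) := by
        have := congrArg (Nat.cast : ℕ → ℂ) cc
        push_cast at this
        linear_combination this
      rw [e1, e3, pow_add]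
      field_simp
      linear_combination ((-1 : ℂ)) ^ k * ρ ^ k * (k.factorial : ℂ) *
        ap (β + k) j * ap (β + k) (n - 2 * k - j) * ccC
    · intro m hm hnotm
      rw [mem_range] at hm
      rw [mem_Ico] at hnotm
      push_neg at hnotm
      by_cases hmk : m < k
      · rw [Nat.choose_eq_zero_of_lt hmk]; simp
      · have : n - m < k := by omega
        rw [Nat.choose_eq_zero_of_lt this]; simp
  · rw [Nat.choose_eq_zero_of_lt (show n - k < k by omega)]
    rw [Finset.sum_eq_zero]
    · simp
    intro m hm
    rw [mem_range] at hm
    by_cases hmk : m < k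
    · rw [Nat.choose_eq_zero_of_lt hmk]; simp
    · rw [Nat.choose_eq_zero_of_lt (show n - m < k by omega)]; simp

theorem stmt_3 (n : ℕ) (ρ β : ℂ) (hβ : ∀ j : ℕ, β ≠ -(j : ℂ)) :
    ∑ m ∈ range (n + 1),
        (-1 : ℂ) ^ m * (n.choose m : ℂ) * (ascPochhammer ℂ m).eval β *
          (ascPochhammer ℂ (n - m)).eval β *
          ∑ k ∈ range (m + 1),
            (m.choose k : ℂ) * ((n - m).choose k : ℂ) * ρ ^ k * (k.factorial : ℂ) /
              (ascPochhammer ℂ k).eval β =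
      if Odd n then 0
      else (n.factorial : ℂ) / ((n / 2).factorial : ℂ) * (ascPochhammer ℂ (n / 2)).eval β *
        (1 - ρ) ^ (n / 2) := by
  have hdef : ∀ (x : ℂ) (k : ℕ), (ascPochhammer ℂ k).eval x = ap x k := fun _ _ => rfl
  simp only [hdef]
  have stepA : (∑ m ∈ range (n + 1), (-1 : ℂ) ^ m * (n.choose m : ℂ) * ap β m * ap β (n - m) *
        ∑ k ∈ range (m + 1),
          (m.choose k : ℂ) * ((n - m).choose k : ℂ) * ρ ^ k * (k.factorial : ℂ) / ap β k)
      = ∑ k ∈ range (n + 1), ∑ m ∈ range (n + 1),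
          (-1 : ℂ) ^ m * (n.choose m : ℂ) * ap β m * ap β (n - m) *
            ((m.choose k : ℂ) * ((n - m).choose k : ℂ) * ρ ^ k * (k.factorial : ℂ) / ap β k) := by
    rw [Finset.sum_comm]
    refine Finset.sum_congr rfl fun m hm => ?_
    rw [mem_range] at hm
    rw [Finset.mul_sum]
    refine Finset.sum_subset ?_ ?_
    · intro k hk; rw [mem_range] at hk ⊢; omega
    · intro k hk hknot
      rw [mem_range, not_lt] at hknot
      rw [Nat.choose_eq_zero_of_lt (by omega : m < k)]
      simp
  rw [stepA, Finset.sum_congr rfl fun k _ => colsum n k ρ β hβ]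
  rcases Nat.even_or_odd n with he | ho
  · rw [if_neg (Nat.not_odd_iff_even.mpr he)]
    obtain ⟨t, ht⟩ := he
    obtain ⟨s, rfl⟩ : ∃ s, n = 2 * s := ⟨t, by omega⟩
    rw [show 2 * s / 2 = s from Nat.mul_div_cancel_left s (by norm_num)]
    rw [← Finset.sum_subset
      (show range (s + 1) ⊆ range (2 * s + 1) by intro k hk; rw [mem_range] at hk ⊢; omega)
      ?_]
    · have hbinom : (1 - ρ) ^ s = ∑ k ∈ range (s + 1), (-ρ) ^ k * (s.choose k : ℂ) := by
        rw [show (1 : ℂ) - ρ = -ρ + 1 by ring, add_pow]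
        exact Finset.sum_congr rfl fun k hk => by rw [one_pow, mul_one]
      rw [hbinom, Finset.mul_sum]
      refine Finset.sum_congr rfl fun k hk => ?_
      rw [mem_range] at hk
      have hks : k ≤ s := by omega
      rw [show 2 * s - 2 * k = 2 * (s - k) by omega, AA_even]
      have e1 : ap β k * ap (β + k) (s - k) = ap β s := by
        rw [← ap_add]; congr 1; omega
      have hkf : (k.factorial : ℂ) ≠ 0 := Nat.cast_ne_zero.mpr k.factorial_ne_zero
      have hskf : ((s - k).factorial : ℂ) ≠ 0 := Nat.cast_ne_zero.mpr (s - k).factorial_ne_zero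
      have hsf : (s.factorial : ℂ) ≠ 0 := Nat.cast_ne_zero.mpr s.factorial_ne_zero
      have f1 : ((2 * s - k).choose k : ℂ) * (k.factorial : ℂ) * ((2 * (s - k)).factorial : ℂ)
          = ((2 * s - k).factorial : ℂ) := by
        have h := Nat.choose_mul_factorial_mul_factorial (show k ≤ 2 * s - k by omega)
        rw [show 2 * s - k - k = 2 * (s - k) by omega] at h
        exact_mod_cast congrArg (Nat.cast : ℕ → ℂ) h
      have f2 : ((2 * s).choose k : ℂ) * (k.factorial : ℂ) * ((2 * s - k).factorial : ℂ)
          = ((2 * s).factorial : ℂ) := by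
        exact_mod_cast congrArg (Nat.cast : ℕ → ℂ)
          (Nat.choose_mul_factorial_mul_factorial (show k ≤ 2 * s by omega))
      have f3 : (s.choose k : ℂ) * (k.factorial : ℂ) * ((s - k).factorial : ℂ)
          = (s.factorial : ℂ) := by
        exact_mod_cast congrArg (Nat.cast : ℕ → ℂ)
          (Nat.choose_mul_factorial_mul_factorial hks)
      have fkey : ((2 * s).choose k : ℂ) * ((2 * s - k).choose k : ℂ) *
            ((2 * (s - k)).factorial : ℂ) * (s.factorial : ℂ) * (k.factorial : ℂ)
          = ((2 * s).factorial : ℂ) * (s.choose k : ℂ) * ((s - k).factorial : ℂ) := by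
        apply mul_left_cancel₀ hkf
        linear_combination ((k.factorial : ℂ) * ((2 * s).choose k : ℂ) * (s.factorial : ℂ)) * f1
          + (s.factorial : ℂ) * f2 - ((2 * s).factorial : ℂ) * f3
      rw [← e1]
      field_simp
      linear_combination ((-ρ) ^ k * ap β k * ap (β + k) (s - k)) * fkey
    · intro k hk hknot
      rw [mem_range, not_lt] at hknot
      rw [Nat.choose_eq_zero_of_lt (show 2 * s - k < k by omega)]
      simp
  · rw [if_pos ho]
    obtain ⟨c, hc⟩ := ho
    refine Finset.sum_eq_zero fun k hk => ?_
    rw [mem_range] at hk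
    by_cases h2k : 2 * k ≤ n
    · rw [AA_odd _ _ ⟨c - k, by omega⟩]; ring
    · rw [Nat.choose_eq_zero_of_lt (show n - k < k by omega)]; simp
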